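/- Let A be the 4-by-4 reciprocal matrix with rows (1, 1/3, 1/2, 1), (3, 1, 1, 1), (2, 1, 1, 1), (1, 1, 1, 1). Then u = (1,3,3,3) and v = (1,1,2,1) are both efficient for A, but u + v = (2,4,5,4) is not efficient for A. Hence the set of efficient vectors of a reciprocal matrix need not be convex. -/

import Mathlib

/-- Edge `p → q` in the digraph `G(A, w)`. -/
def Edge {n : ℕ} (A : Matrix (Fin n) (Fin n) ℝ) (w : Fin n → ℝ) (p q : Fin n) : Prop :=
  p ≠ q ∧ A p q * w q ≤ w p

/-- `w` is efficient for `A` iff `w` is positive and `G(A,w)` is strongly connected. -/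
def Efficient {n : ℕ} (A : Matrix (Fin n) (Fin n) ℝ) (w : Fin n → ℝ) : Prop :=
  (∀ i, 0 < w i) ∧ ∀ i j : Fin n, Relation.ReflTransGen (Edge A w) i j

lemma cycle4 {α : Type*} {R : α → α → Prop} {a b c d : α}
    (hab : R a b) (hbc : R b c) (hcd : R c d) (hda : R d a)
    (hcover : ∀ x : α, x = a ∨ x = b ∨ x = c ∨ x = d) :
    ∀ x y, Relation.ReflTransGen R x y := by
  have sab := Relation.ReflTransGen.single hab
  have sbc := Relation.ReflTransGen.single hbc
  have scd := Relation.ReflTransGen.single hcd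
  have sda := Relation.ReflTransGen.single hda
  intro x y
  rcases hcover x with rfl | rfl | rfl | rfl <;>
    rcases hcover y with rfl | rfl | rfl | rfl <;>
    first
      | exact Relation.ReflTransGen.refl
      | exact sab
      | exact sbc
      | exact scd
      | exact sda
      | exact sab.trans sbc
      | exact sbc.trans scd
      | exact scd.trans sda
      | exact sda.trans sab
      | exact (sab.trans sbc).trans scd
      | exact (sbc.trans scd).trans sda
      | exact (scd.trans sda).trans sab
      | exact (sda.trans sab).trans sbc

/-- For the given 4-by-4 double perturbed consistent matrix, `u = (1,3,3,3)` and
`v = (1,1,2,1)` are efficient but `u + v = (2,4,5,4)` is not: the set of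
efficient vectors need not be convex. -/
theorem stmt18 :
    Efficient (!![1, 1/3, 1/2, 1; 3, 1, 1, 1; 2, 1, 1, 1; 1, 1, 1, 1]) ![1, 3, 3, 3] ∧
    Efficient (!![1, 1/3, 1/2, 1; 3, 1, 1, 1; 2, 1, 1, 1; 1, 1, 1, 1]) ![1, 1, 2, 1] ∧
    ¬ Efficient (!![1, 1/3, 1/2, 1; 3, 1, 1, 1; 2, 1, 1, 1; 1, 1, 1, 1]) ![2, 4, 5, 4] := by
  have hcover : ∀ x : Fin 4, x = 0 ∨ x = 1 ∨ x = 2 ∨ x = 3 := by decide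
  refine ⟨⟨?_, ?_⟩, ⟨?_, ?_⟩, ?_⟩
  · intro i; fin_cases i <;> norm_num
  · -- cycle 0 → 1 → 2 → 3 → 0 for u = (1,3,3,3)
    refine cycle4 (a := (0 : Fin 4)) (b := 1) (c := 2) (d := 3)
      ⟨by decide, by norm_num [Matrix.vecHead, Matrix.vecTail]⟩
      ⟨by decide, by simp [Matrix.vecHead, Matrix.vecTail] <;> norm_num⟩
      ⟨by decide, by simp [Matrix.vecHead, Matrix.vecTail] <;> norm_num⟩
      ⟨by decide, by simp [Matrix.vecHead, Matrix.vecTail] <;> norm_num⟩ hcover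
  · intro i; fin_cases i <;> norm_num
  · -- cycle 0 → 2 → 1 → 3 → 0 for v = (1,1,2,1)
    refine cycle4 (a := (0 : Fin 4)) (b := 2) (c := 1) (d := 3)
      ⟨by decide, by simp [Matrix.vecHead, Matrix.vecTail] <;> norm_num⟩
      ⟨by decide, by simp [Matrix.vecHead, Matrix.vecTail] <;> norm_num⟩
      ⟨by decide, by simp [Matrix.vecHead, Matrix.vecTail] <;> norm_num⟩
      ⟨by decide, by simp [Matrix.vecHead, Matrix.vecTail] <;> norm_num⟩
      (by intro x; rcases hcover x with h | h | h | h <;> tauto)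
  · rintro ⟨-, hconn⟩
    have hno : ∀ x : Fin 4, ¬ Edge (!![1, 1/3, 1/2, 1; 3, 1, 1, 1; 2, 1, 1, 1; 1, 1, 1, 1])
        ![2, 4, 5, 4] x 2 := by
      intro x
      fin_cases x <;> rintro ⟨hne, hle⟩ <;>
        first
          | exact hne rfl
          | (simp [Matrix.vecHead, Matrix.vecTail] at hle <;> norm_num at hle)
    rcases (hconn 0 2).cases_tail with h | ⟨p, -, he⟩
    · exact absurd h (by decide)
    · exact hno p he
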